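/- Let f and g be generalized polynomials with nonnegative real coefficients and nonnegative rational exponents. Suppose there exist j in the support of f and j' in the support of g such that the fractional parts of j and j' both lie in (0, 1/2]. Then Ψ(f·g) ≠ Ψ(f)·Ψ(g). -/

import Mathlib

open Finsupp

/-- Evaluation of a generalized polynomial `∑ c_j t^j` (a finitely supported
function `ℚ →₀ ℝ`, with convolution product) at a positive real `x`, using
real exponentiation. -/
noncomputable def gpEval (f : AddMonoidAlgebra ℝ ℚ) (x : ℝ) : ℝ :=
  f.coeff.sum fun j c => c * x ^ (j : ℝ)

/-- The linear rounding operator `Ψ` with `Ψ(t^j) = t^⌈j⌉`. -/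
noncomputable def gpPsi (f : AddMonoidAlgebra ℝ ℚ) : AddMonoidAlgebra ℝ ℚ :=
  AddMonoidAlgebra.ofCoeff (Finsupp.mapDomain (fun j => (⌈j⌉ : ℚ)) f.coeff)

noncomputable def Tmap : (ℚ →₀ ℝ) →ₗ[ℝ] ℝ :=
  Finsupp.lsum ℝ fun k => LinearMap.id.smulRight ((⌈k⌉ : ℤ) : ℝ)

lemma Tmap_apply (h : ℚ →₀ ℝ) :
    Tmap h = h.sum fun k x => x * ((⌈k⌉:ℤ):ℝ) := by
  simp [Tmap, Finsupp.lsum_apply, Finsupp.sum]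

lemma Tmap_single (a : ℚ) (b : ℝ) : Tmap (Finsupp.single a b) = b * ((⌈a⌉:ℤ):ℝ) := by
  rw [Tmap_apply, Finsupp.sum_single_index]; simp

lemma Tmap_mul (f g : AddMonoidAlgebra ℝ ℚ) :
    Tmap (f * g).coeff = ∑ j ∈ f.coeff.support, ∑ j' ∈ g.coeff.support,
      f.coeff j * g.coeff j' * ((⌈j + j'⌉:ℤ):ℝ) := by
  rw [AddMonoidAlgebra.mul_def, AddMonoidAlgebra.coeff_finsuppSum, map_finsuppSum]
  simp only [AddMonoidAlgebra.coeff_finsuppSum, map_finsuppSum, AddMonoidAlgebra.coeff_single, Tmap_single]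
  rfl

lemma Tmap_psi (h : AddMonoidAlgebra ℝ ℚ) : Tmap (gpPsi h).coeff = Tmap h.coeff := by
  rw [gpPsi, AddMonoidAlgebra.coeff_ofCoeff, Tmap_apply]
  rw [Finsupp.sum_mapDomain_index (by simp) (by intros; rw [add_mul])]
  simp [Tmap_apply]

lemma Tmap_psi_mul (f g : AddMonoidAlgebra ℝ ℚ) :
    Tmap (gpPsi f * gpPsi g).coeff = ∑ j ∈ f.coeff.support, ∑ j' ∈ g.coeff.support,
      f.coeff j * g.coeff j' * (((⌈j⌉ + ⌈j'⌉ : ℤ)):ℝ) := by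
  have step1 : Tmap (gpPsi f * gpPsi g).coeff
      = (Finsupp.mapDomain (fun j => (⌈j⌉:ℚ)) f.coeff).sum fun a b =>
          (Finsupp.mapDomain (fun j => (⌈j⌉:ℚ)) g.coeff).sum fun a' b' =>
            b * b' * ((⌈a + a'⌉:ℤ):ℝ) := by
    rw [AddMonoidAlgebra.mul_def, AddMonoidAlgebra.coeff_finsuppSum, map_finsuppSum]
    simp only [AddMonoidAlgebra.coeff_finsuppSum, map_finsuppSum, AddMonoidAlgebra.coeff_single, Tmap_single]
    rfl
  have step2 : ((Finsupp.mapDomain (fun j => (⌈j⌉:ℚ)) f.coeff).sum fun a b =>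
        (Finsupp.mapDomain (fun j => (⌈j⌉:ℚ)) g.coeff).sum fun a' b' =>
          b * b' * ((⌈a + a'⌉:ℤ):ℝ))
      = f.coeff.sum fun j b =>
          (Finsupp.mapDomain (fun j => (⌈j⌉:ℚ)) g.coeff).sum fun a' b' =>
            b * b' * ((⌈(⌈j⌉:ℚ) + a'⌉:ℤ):ℝ) :=
    Finsupp.sum_mapDomain_index (by intro b; simp [Finsupp.sum])
      (by intros; simp [add_mul, Finsupp.sum_add])
  have step3 : ∀ j : ℚ, ∀ b : ℝ, ((Finsupp.mapDomain (fun j => (⌈j⌉:ℚ)) g.coeff).sum fun a' b' =>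
        b * b' * ((⌈(⌈j⌉:ℚ) + a'⌉:ℤ):ℝ))
      = g.coeff.sum fun j' b' => b * b' * ((⌈(⌈j⌉:ℚ) + (⌈j'⌉:ℚ)⌉:ℤ):ℝ) := fun j b =>
    Finsupp.sum_mapDomain_index (by intro b'; simp)
      (by intros; ring)
  rw [step1, step2, Finsupp.sum]
  refine Finset.sum_congr rfl fun j hj => ?_
  rw [step3 j (f.coeff j), Finsupp.sum]
  refine Finset.sum_congr rfl fun j' hj' => ?_
  rw [← Int.cast_add, Int.ceil_intCast]

lemma ceil_add_lt (j j' : ℚ) (h1 : 0 < j - ⌊j⌋) (h2 : j - ⌊j⌋ ≤ 1/2)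
    (h1' : 0 < j' - ⌊j'⌋) (h2' : j' - ⌊j'⌋ ≤ 1/2) :
    ⌈j + j'⌉ < ⌈j⌉ + ⌈j'⌉ := by
  have hc1 : ⌊j⌋ < ⌈j⌉ := by rw [Int.lt_ceil]; linarith
  have hc2 : ⌊j'⌋ < ⌈j'⌉ := by rw [Int.lt_ceil]; linarith
  have hle : ⌈j + j'⌉ ≤ ⌊j⌋ + ⌊j'⌋ + 1 := by
    rw [Int.ceil_le]; push_cast; linarith
  omega

theorem stmt_7 (f g : AddMonoidAlgebra ℝ ℚ)
    (hfexp : ∀ j ∈ f.coeff.support, 0 ≤ j) (hgexp : ∀ j ∈ g.coeff.support, 0 ≤ j)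
    (hfpos : ∀ j, 0 ≤ f.coeff j) (hgpos : ∀ j, 0 ≤ g.coeff j)
    (h : ∃ j ∈ f.coeff.support, ∃ j' ∈ g.coeff.support,
      (0 < j - ⌊j⌋ ∧ j - ⌊j⌋ ≤ 1/2) ∧ (0 < j' - ⌊j'⌋ ∧ j' - ⌊j'⌋ ≤ 1/2)) :
    gpPsi (f * g) ≠ gpPsi f * gpPsi g := by
  obtain ⟨j₀, hj₀, j₀', hj₀', ⟨hf1, hf2⟩, ⟨hg1, hg2⟩⟩ := h
  intro heq
  have hT : Tmap (gpPsi (f * g)).coeff = Tmap (gpPsi f * gpPsi g).coeff := by rw [heq]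
  rw [Tmap_psi, Tmap_mul, Tmap_psi_mul] at hT
  have hlt : (∑ j ∈ f.coeff.support, ∑ j' ∈ g.coeff.support, f.coeff j * g.coeff j' * ((⌈j + j'⌉ : ℤ) : ℝ))
      < ∑ j ∈ f.coeff.support, ∑ j' ∈ g.coeff.support, f.coeff j * g.coeff j' * (((⌈j⌉ + ⌈j'⌉ : ℤ)) : ℝ) := by
    refine Finset.sum_lt_sum (fun j hj => Finset.sum_le_sum fun j' hj' => ?_) ⟨j₀, hj₀, ?_⟩
    · refine mul_le_mul_of_nonneg_left ?_ (mul_nonneg (hfpos j) (hgpos j'))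
      exact_mod_cast Int.ceil_add_le j j'
    · refine Finset.sum_lt_sum (fun j' hj' => ?_) ⟨j₀', hj₀', ?_⟩
      · refine mul_le_mul_of_nonneg_left ?_ (mul_nonneg (hfpos j₀) (hgpos j'))
        exact_mod_cast Int.ceil_add_le j₀ j'
      · have hfp : 0 < f.coeff j₀ := lt_of_le_of_ne (hfpos j₀)
          (Ne.symm (Finsupp.mem_support_iff.mp hj₀))
        have hgp : 0 < g.coeff j₀' := lt_of_le_of_ne (hgpos j₀')
          (Ne.symm (Finsupp.mem_support_iff.mp hj₀'))
        refine mul_lt_mul_of_pos_left ?_ (mul_pos hfp hgp)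
        exact_mod_cast ceil_add_lt j₀ j₀' hf1 hf2 hg1 hg2
  exact absurd hT (ne_of_lt hlt)
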